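/- Proposition 1 (correctness of the efficient instantiation algorithm). Let expr_G be a symbolic multidimensional expression satisfying the assumptions of Lemmas 1 and 2: every path from a leaf node to the root passes through at least one sum operator, and for every leaf node the union of the global index placeholder tuples G_j over all sum operators j on its path to the root equals G. Then, given the same set data S*, the constraint matrices output by the exhaustive instantiation algorithm (Algorithm 1) and by the context-passing instantiation algorithm (Algorithm 2) are identical: for every global index tuple G* ∈ space(G) and every variable v, the coefficient of v in row G* produced by Algorithm 2 (after aggregating tagged terms with equal tags) equals the coefficient of v in the expression expr_{G*} produced by Algorithm 1. -/

import Mathlib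

/-- A symbolic multidimensional expression tree.  Leaf nodes are *terms*, consisting of
a rational coefficient and a variable whose indices are determined (as functions) by the
values of the index placeholders recorded in a context `ℕ → Option V`.  Non-leaf nodes are
binary add/subtract operators and unary sum operators; a sum operator carries its logical
condition `(Gk ‖ Lk) ∈ data`, where `Gk` is the tuple of global index placeholders,
`Lk` the tuple of local index placeholders, and `data` the instantiating finite set of
index tuples. -/
inductive GExpr (V Var : Type) : Type where
  | term (coef : (ℕ → Option V) → ℚ) (var : (ℕ → Option V) → Var) : GExpr V Var
  | add (l r : GExpr V Var) : GExpr V Var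
  | sub (l r : GExpr V Var) : GExpr V Var
  | sum (Gk Lk : List ℕ) (data : Finset (List V)) (body : GExpr V Var) : GExpr V Var

variable {V Var : Type}

/-- Extend a context by binding the placeholder names `names` to the values `vals`
(componentwise). -/
def bindCtx (ctx : ℕ → Option V) (names : List ℕ) (vals : List V) : ℕ → Option V :=
  fun p => match (names.zip vals).find? (fun q => q.1 == p) with
    | some q => some q.2
    | none => ctx p

/-- `agreesB ctx names vals` holds iff the value tuple `vals` agrees with the context `ctx`
on every placeholder of `names` that is already bound in `ctx`. -/
def agreesB [DecidableEq V] (ctx : ℕ → Option V) (names : List ℕ) (vals : List V) : Bool :=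
  (names.zip vals).all (fun q => match ctx q.1 with
    | some a => decide (q.2 = a)
    | none => true)

/-- Algorithm 1 (exhaustive instantiation), evaluation of one row: given a context that binds
all global index placeholders to a concrete tuple `G*`, evaluate the expression tree to the
linear expression `expr_{G*}`, represented as the function assigning to each variable its
coefficient.  A sum operator is evaluated as the sum of its operand over all tuples of its
set data whose `Gk`-components equal the corresponding components of `G*`, with the
`Lk`-components bound as the values of the local index placeholders. -/
def evalFull [DecidableEq V] [DecidableEq Var] :
    GExpr V Var → (ℕ → Option V) → Var → ℚ
  | .term c v, ctx => fun w => if w = v ctx then c ctx else 0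
  | .add l r, ctx => fun w => evalFull l ctx w + evalFull r ctx w
  | .sub l r, ctx => fun w => evalFull l ctx w - evalFull r ctx w
  | .sum Gk Lk data body, ctx => fun w =>
      ∑ tup ∈ data.filter (fun tup => agreesB ctx Gk (tup.take Gk.length) = true),
        evalFull body (bindCtx ctx (Gk ++ Lk) tup) w

/-- Algorithm 2 (context-passing instantiation), with aggregation of tagged terms built in:
starting from a (partial) context, traverse the tree once; at a sum operator iterate over
those tuples of the set data that agree with the context on the already-bound placeholders
of `Gk`, extending the context by the bindings `Gk := Gk*`, `Lk := Lk*`; at a subtract node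
negate the right operand's terms; at a leaf emit the term tagged with the context's values
of all global placeholders `Glist`.  `evalTagged Glist e ctx tag w` is the aggregated
coefficient of variable `w` in the constraint row indexed by `tag`. -/
def evalTagged [DecidableEq V] [DecidableEq Var] (Glist : List ℕ) :
    GExpr V Var → (ℕ → Option V) → List (Option V) → Var → ℚ
  | .term c v, ctx => fun tag w => if tag = Glist.map ctx ∧ w = v ctx then c ctx else 0
  | .add l r, ctx => fun tag w => evalTagged Glist l ctx tag w + evalTagged Glist r ctx tag w
  | .sub l r, ctx => fun tag w => evalTagged Glist l ctx tag w - evalTagged Glist r ctx tag w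
  | .sum Gk Lk data body, ctx => fun tag w =>
      ∑ tup ∈ data.filter (fun tup => agreesB ctx Gk (tup.take Gk.length) = true),
        evalTagged Glist body (bindCtx ctx (Gk ++ Lk) tup) tag w

/-- `spaceTuples sp names` is `space(G)` for the tuple `names` of placeholders: the finite
set of tuples whose `j`-th component ranges over the admissible values `sp (names j)`. -/
def spaceTuples [DecidableEq V] (sp : ℕ → Finset V) : List ℕ → Finset (List V)
  | [] => {[]}
  | g :: gs => ((sp g) ×ˢ spaceTuples sp gs).image (fun p => p.1 :: p.2)

/-- The full context binding the global placeholders `Glist` to the concrete tuple `Gstar`. -/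
def fullCtx (Glist : List ℕ) (Gstar : List V) : ℕ → Option V :=
  bindCtx (fun _ => none) Glist Gstar

/-- One-hole contexts for expression trees, used to designate the position of a node. -/
inductive GCtx (V Var : Type) : Type where
  | hole : GCtx V Var
  | addL (c : GCtx V Var) (r : GExpr V Var) : GCtx V Var
  | addR (l : GExpr V Var) (c : GCtx V Var) : GCtx V Var
  | subL (c : GCtx V Var) (r : GExpr V Var) : GCtx V Var
  | subR (l : GExpr V Var) (c : GCtx V Var) : GCtx V Var
  | sumC (Gk Lk : List ℕ) (data : Finset (List V)) (c : GCtx V Var) : GCtx V Var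

/-- Plug an expression into the hole of a one-hole context. -/
def GCtx.plug : GCtx V Var → GExpr V Var → GExpr V Var
  | .hole, e => e
  | .addL c r, e => .add (c.plug e) r
  | .addR l c, e => .add l (c.plug e)
  | .subL c r, e => .sub (c.plug e) r
  | .subR l c, e => .sub l (c.plug e)
  | .sumC Gk Lk d c, e => .sum Gk Lk d (c.plug e)

/-- The path from the hole to the root contains no sum operator. -/
def GCtx.noSum : GCtx V Var → Prop
  | .hole => True
  | .addL c _ => c.noSum
  | .addR _ c => c.noSum
  | .subL c _ => c.noSum
  | .subR _ c => c.noSum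
  | .sumC _ _ _ _ => False

/-- The global index placeholder tuples `Gk` of the sum operators on the path from the
hole to the root. -/
def GCtx.spineGks : GCtx V Var → List (List ℕ)
  | .hole => []
  | .addL c _ => c.spineGks
  | .addR _ c => c.spineGks
  | .subL c _ => c.spineGks
  | .subR _ c => c.spineGks
  | .sumC Gk _ _ c => Gk :: c.spineGks

/-- Every path from a leaf node to the root passes through at least one sum operator
(the assumption justified by Lemma 1). -/
def GExpr.allUnderSum : GExpr V Var → Prop
  | .term _ _ => False
  | .add l r => l.allUnderSum ∧ r.allUnderSum
  | .sub l r => l.allUnderSum ∧ r.allUnderSum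
  | .sum _ _ _ _ => True

/-- Well-formedness of a symbolic expression w.r.t. the global placeholder tuple `Glist`:
at every sum operator, `Gk` is a tuple of placeholders from `Glist`, the local placeholders
`Lk` are disjoint from the globals, both tuples consist of distinct placeholders, and every
tuple of the set data has length `|Gk| + |Lk|`. -/
def GExpr.wf (Glist : List ℕ) : GExpr V Var → Prop
  | .term _ _ => True
  | .add l r => l.wf Glist ∧ r.wf Glist
  | .sub l r => l.wf Glist ∧ r.wf Glist
  | .sum Gk Lk data body =>
      (∀ g ∈ Gk, g ∈ Glist) ∧ (∀ l ∈ Lk, l ∉ Glist) ∧ Gk.Nodup ∧ Lk.Nodup ∧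
      (∀ tup ∈ data, tup.length = Gk.length + Lk.length) ∧ body.wf Glist

/-- For every leaf node, the union of the global placeholder tuples `Gk` of the sum
operators on its path to the root covers all of `Glist` (the assumption justified by
Lemma 2); `acc` accumulates the globals bound so far. -/
def GExpr.covers (Glist : List ℕ) : GExpr V Var → List ℕ → Prop
  | .term _ _, acc => ∀ g ∈ Glist, g ∈ acc
  | .add l r, acc => l.covers Glist acc ∧ r.covers Glist acc
  | .sub l r, acc => l.covers Glist acc ∧ r.covers Glist acc
  | .sum Gk _ _ body, acc => body.covers Glist (acc ++ Gk)

/-- Lemma 2's data expansion: replace every tuple of `data` by all its expansions inserting,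
after the first `nG` (global) components, one value from `vals`. -/
def expandData [DecidableEq V] (data : Finset (List V)) (nG : ℕ) (vals : Finset V) :
    Finset (List V) :=
  (data ×ˢ vals).image (fun p => p.1.take nG ++ p.2 :: p.1.drop nG)

/-- Proposition 2's data restriction w.r.t. the global placeholder `gk` and the admissible
subset `P`: every set data whose index tuples contain the placeholder `gk` is replaced by
its subset of tuples whose `gk`-component lies in `P`. -/
def GExpr.restrict [DecidableEq V] (gk : ℕ) (P : Finset V) : GExpr V Var → GExpr V Var
  | .term c v => .term c v
  | .add l r => .add (l.restrict gk P) (r.restrict gk P)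
  | .sub l r => .sub (l.restrict gk P) (r.restrict gk P)
  | .sum Gk Lk data body =>
      if gk ∈ Gk ++ Lk then
        .sum Gk Lk
          (data.filter (fun tup => ((tup[(Gk ++ Lk).idxOf gk]?).any fun a => decide (a ∈ P)) = true))
          (body.restrict gk P)
      else .sum Gk Lk data (body.restrict gk P)

/-! ### Auxiliary lemmas for Proposition 1 -/

lemma agreesB_iff [DecidableEq V] (ctx : ℕ → Option V) (names : List ℕ) (vals : List V) :
    agreesB ctx names vals = true ↔
    ∀ q ∈ names.zip vals, ∀ a, ctx q.1 = some a → q.2 = a := by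
  simp only [agreesB, List.all_eq_true]
  constructor
  · intro h q hq a ha
    have := h q hq
    rw [ha] at this
    simpa using this
  · intro h q hq
    cases hctx : ctx q.1 with
    | none => simp
    | some a => simpa using h q hq a hctx

lemma zip_split (Gk Lk : List ℕ) (tup : List V) (h : Gk.length ≤ tup.length) :
    (Gk ++ Lk).zip tup = Gk.zip (tup.take Gk.length) ++ Lk.zip (tup.drop Gk.length) := by
  conv_lhs => rw [← List.take_append_drop Gk.length tup]
  rw [List.zip_append]
  rw [List.length_take]
  omega

lemma find_isSome_of_mem [DecidableEq V] (names : List ℕ) (vals : List V)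
    (hlen : names.length ≤ vals.length) (g : ℕ) (hg : g ∈ names) :
    ((names.zip vals).find? (fun q => q.1 == g)).isSome := by
  rw [List.find?_isSome]
  have h1 : ((names.zip vals).map Prod.fst) = names := List.map_fst_zip hlen
  rw [← h1] at hg
  rcases List.mem_map.mp hg with ⟨q, hq, hq1⟩
  exact ⟨q, hq, by simp [hq1]⟩

lemma exists_zip_pair (names : List ℕ) (vals : List V)
    (hlen : names.length ≤ vals.length) (g : ℕ) (hg : g ∈ names) :
    ∃ q ∈ names.zip vals, q.1 = g := by
  have h1 : ((names.zip vals).map Prod.fst) = names := List.map_fst_zip hlen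
  rw [← h1] at hg
  rcases List.mem_map.mp hg with ⟨q, hq, hq1⟩
  exact ⟨q, hq, hq1⟩

lemma bindCtx_not_mem (ctx : ℕ → Option V) (names : List ℕ) (tup : List V) (g : ℕ)
    (hg : g ∉ names) : bindCtx ctx names tup g = ctx g := by
  have hf : (names.zip tup).find? (fun q => q.1 == g) = none := by
    rw [List.find?_eq_none]
    intro q hq
    obtain ⟨x, y⟩ := q
    have : x ∈ names := (List.of_mem_zip hq).1
    simp only [beq_iff_eq]
    intro h; exact hg (h ▸ this)
  simp [bindCtx, hf]

/-- If `q` is a pair of the global part of the zip and the name tuple is duplicate-free,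
then binding assigns `q.1 := q.2`, for any context. -/
lemma bindCtx_mem_Gk [DecidableEq V] (Gk Lk : List ℕ) (tup : List V)
    (hlen : tup.length = Gk.length + Lk.length) (hnodup : (Gk ++ Lk).Nodup)
    (q : ℕ × V) (hq : q ∈ Gk.zip (tup.take Gk.length)) (ctx : ℕ → Option V) :
    bindCtx ctx (Gk ++ Lk) tup q.1 = some q.2 := by
  have hle : Gk.length ≤ tup.length := by omega
  have hq' : q ∈ (Gk ++ Lk).zip tup := by
    rw [zip_split Gk Lk tup hle]; exact List.mem_append_left _ hq
  have hq1 : q.1 ∈ Gk ++ Lk := by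
    obtain ⟨x, y⟩ := q
    exact List.mem_append_left _ (List.of_mem_zip hq).1
  have hsome := find_isSome_of_mem (Gk ++ Lk) tup (by simp [hlen]) q.1 hq1
  obtain ⟨q', hf⟩ := Option.isSome_iff_exists.mp hsome
  have hq'mem := List.mem_of_find?_eq_some hf
  have hq'1 : q'.1 = q.1 := by simpa using List.find?_some hf
  have hnd : (((Gk ++ Lk).zip tup).map Prod.fst).Nodup := by
    rw [List.map_fst_zip (l₁ := Gk ++ Lk) (l₂ := tup) (by simp [hlen])]; exact hnodup
  have hqq : q' = q := List.inj_on_of_nodup_map hnd hq'mem hq' hq'1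
  subst hqq
  simp [bindCtx, hf]

lemma wf_nodup_append {Glist Gk Lk : List ℕ}
    (hGk : ∀ g ∈ Gk, g ∈ Glist) (hLk : ∀ l ∈ Lk, l ∉ Glist)
    (hndG : Gk.Nodup) (hndL : Lk.Nodup) : (Gk ++ Lk).Nodup :=
  hndG.append hndL (fun a haG haL => hLk a haL (hGk a haG))

/-- **Zero lemma**: if the context already binds some global placeholder to a value
different from the target row `target`, then Algorithm 2 contributes nothing to the
row tagged `Glist.map target`. -/
lemma evalTagged_wrong [DecidableEq V] [DecidableEq Var] (Glist : List ℕ)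
    (target : ℕ → Option V) (w : Var) :
    ∀ (e : GExpr V Var), e.wf Glist →
    ∀ ctx : ℕ → Option V, (∃ g ∈ Glist, ∃ v, ctx g = some v ∧ some v ≠ target g) →
    evalTagged Glist e ctx (Glist.map target) w = 0 := by
  intro e
  induction e with
  | term c v =>
      intro _ ctx h
      obtain ⟨g, hg, v', hv', hne⟩ := h
      have htag : Glist.map target ≠ Glist.map ctx := by
        intro h
        have := (List.map_inj_left.mp h) g hg
        rw [hv'] at this; exact hne this.symm
      simp only [evalTagged]
      rw [if_neg (by intro hc; exact htag hc.1)]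
  | add l r ihl ihr =>
      intro hwf ctx h
      simp only [evalTagged, ihl hwf.1 ctx h, ihr hwf.2 ctx h, add_zero]
  | sub l r ihl ihr =>
      intro hwf ctx h
      simp only [evalTagged, ihl hwf.1 ctx h, ihr hwf.2 ctx h, sub_zero]
  | sum Gk Lk data body ih =>
      intro hwf ctx h
      obtain ⟨g, hg, v, hv, hne⟩ := h
      obtain ⟨hGk, hLk, hndG, hndL, hlen, hbwf⟩ := hwf
      simp only [evalTagged]
      apply Finset.sum_eq_zero
      intro tup htup
      rw [Finset.mem_filter] at htup
      obtain ⟨htd, hta⟩ := htup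
      apply ih hbwf
      refine ⟨g, hg, ?_⟩
      have hgL : g ∉ Lk := fun hmem => hLk g hmem hg
      have hlenT := hlen tup htd
      by_cases hgG : g ∈ Gk
      · obtain ⟨q, hq, hq1⟩ := exists_zip_pair Gk (tup.take Gk.length)
          (by rw [List.length_take]; omega) g hgG
        have hbind := bindCtx_mem_Gk Gk Lk tup (hlen tup htd)
          (wf_nodup_append hGk hLk hndG hndL) q hq ctx
        have hq2 : q.2 = v :=
          (agreesB_iff ctx Gk (tup.take Gk.length)).mp hta q hq v (by rw [hq1, hv])
        exact ⟨v, by rw [hq1] at hbind; rw [hbind, hq2], hne⟩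
      · have : g ∉ Gk ++ Lk := by simp [hgG, hgL]
        exact ⟨v, by rw [bindCtx_not_mem ctx (Gk ++ Lk) tup g this, hv], hne⟩

/-- **Main lemma**: Algorithm 2 run from a partial context that agrees with the full
context on all placeholders bound so far computes the same coefficients as Algorithm 1
run from the full context. -/
lemma evalTagged_eq_evalFull [DecidableEq V] [DecidableEq Var] (Glist : List ℕ)
    (target : ℕ → Option V) (htg : ∀ g ∈ Glist, ∃ a, target g = some a) (w : Var) :
    ∀ (e : GExpr V Var), e.wf Glist →
    ∀ (acc : List ℕ) (ctxT ctxF : ℕ → Option V),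
    e.covers Glist acc →
    (∀ p, (p ∈ Glist → p ∈ acc) → ctxT p = ctxF p) →
    (∀ g ∈ Glist, ctxT g = none ∨ ctxT g = target g) →
    (∀ g ∈ Glist, ctxF g = target g) →
    evalTagged Glist e ctxT (Glist.map target) w = evalFull e ctxF w := by
  intro e
  induction e with
  | term c v =>
      intro _ acc ctxT ctxF hcov hH h0 h2
      have hctx : ctxT = ctxF := funext fun p => by
        by_cases hp : p ∈ Glist
        · exact hH p (fun _ => hcov p hp)
        · exact hH p (fun h => absurd h hp)
      subst hctx
      have htag : Glist.map target = Glist.map ctxT :=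
        List.map_inj_left.mpr (fun g hg => (h2 g hg).symm)
      simp [evalTagged, evalFull, htag]
  | add l r ihl ihr =>
      intro hwf acc ctxT ctxF hcov hH h0 h2
      simp only [evalTagged, evalFull,
        ihl hwf.1 acc ctxT ctxF hcov.1 hH h0 h2,
        ihr hwf.2 acc ctxT ctxF hcov.2 hH h0 h2]
  | sub l r ihl ihr =>
      intro hwf acc ctxT ctxF hcov hH h0 h2
      simp only [evalTagged, evalFull,
        ihl hwf.1 acc ctxT ctxF hcov.1 hH h0 h2,
        ihr hwf.2 acc ctxT ctxF hcov.2 hH h0 h2]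
  | sum Gk Lk data body ih =>
      intro hwf acc ctxT ctxF hcov hH h0 h2
      obtain ⟨hGk, hLk, hndG, hndL, hlen, hbwf⟩ := hwf
      have hnodup : (Gk ++ Lk).Nodup := wf_nodup_append hGk hLk hndG hndL
      simp only [evalTagged, evalFull]
      have hsub : data.filter (fun tup => agreesB ctxF Gk (tup.take Gk.length) = true) ⊆
          data.filter (fun tup => agreesB ctxT Gk (tup.take Gk.length) = true) := by
        intro tup htup
        rw [Finset.mem_filter] at *
        refine ⟨htup.1, ?_⟩
        rw [agreesB_iff]
        intro q hq a ha
        obtain ⟨x, y⟩ := q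
        have hxG : x ∈ Glist := hGk x (List.of_mem_zip hq).1
        rcases h0 x hxG with hn | ht
        · rw [hn] at ha; exact absurd ha (by simp)
        · have : ctxF x = some a := by rw [h2 x hxG, ← ht, ha]
          exact (agreesB_iff ctxF Gk (tup.take Gk.length)).mp htup.2 ⟨x, y⟩ hq a this
      rw [← Finset.sum_subset hsub]
      · apply Finset.sum_congr rfl
        intro tup htup
        rw [Finset.mem_filter] at htup
        obtain ⟨htd, htF⟩ := htup
        have hlenT := hlen tup htd
        -- forced values: pairs in the global zip agree with target
        have hforce : ∀ q ∈ Gk.zip (tup.take Gk.length), some q.2 = target q.1 := by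
          intro q hq
          obtain ⟨x, y⟩ := q
          have hxG : x ∈ Glist := hGk x (List.of_mem_zip hq).1
          obtain ⟨a, hta⟩ := htg x hxG
          have : ctxF x = some a := by rw [h2 x hxG, hta]
          have h3 := (agreesB_iff ctxF Gk (tup.take Gk.length)).mp htF ⟨x, y⟩ hq a this
          rw [hta]; exact congrArg some h3
        apply ih hbwf (acc ++ Gk)
        · exact hcov
        · -- H preserved
          intro p hp
          by_cases hpz : p ∈ Gk ++ Lk
          · obtain ⟨q', hf⟩ := Option.isSome_iff_exists.mp
              (find_isSome_of_mem (Gk ++ Lk) tup (by simp [hlenT]) p hpz)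
            simp [bindCtx, hf]
          · rw [bindCtx_not_mem ctxT (Gk ++ Lk) tup p hpz,
               bindCtx_not_mem ctxF (Gk ++ Lk) tup p hpz]
            apply hH p
            intro hpG
            have hpa := hp hpG
            rcases List.mem_append.mp hpa with h | h
            · exact h
            · exact absurd (List.mem_append_left Lk h) hpz
        · -- h0 preserved
          intro g hg
          have hgL : g ∉ Lk := fun hmem => hLk g hmem hg
          by_cases hgG : g ∈ Gk
          · obtain ⟨q, hq, hq1⟩ := exists_zip_pair Gk (tup.take Gk.length)
              (by rw [List.length_take]; omega) g hgG
            right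
            rw [← hq1, bindCtx_mem_Gk Gk Lk tup hlenT hnodup q hq ctxT]
            exact hforce q hq
          · rw [bindCtx_not_mem ctxT (Gk ++ Lk) tup g (by simp [hgG, hgL])]
            exact h0 g hg
        · -- h2 preserved
          intro g hg
          have hgL : g ∉ Lk := fun hmem => hLk g hmem hg
          by_cases hgG : g ∈ Gk
          · obtain ⟨q, hq, hq1⟩ := exists_zip_pair Gk (tup.take Gk.length)
              (by rw [List.length_take]; omega) g hgG
            rw [← hq1, bindCtx_mem_Gk Gk Lk tup hlenT hnodup q hq ctxF]
            exact hforce q hq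
          · rw [bindCtx_not_mem ctxF (Gk ++ Lk) tup g (by simp [hgG, hgL])]
            exact h2 g hg
      · -- tuples passing the partial-context filter but not the full one contribute 0
        intro tup htT htnF
        rw [Finset.mem_filter] at htT
        obtain ⟨htd, htA⟩ := htT
        have hlenT := hlen tup htd
        have hnF : ¬ (agreesB ctxF Gk (tup.take Gk.length) = true) := by
          intro h; exact htnF (Finset.mem_filter.mpr ⟨htd, h⟩)
        rw [agreesB_iff] at hnF
        push_neg at hnF
        obtain ⟨q, hq, a, ha, hqa⟩ := hnF
        have hq1Glist : q.1 ∈ Glist := by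
          obtain ⟨x, y⟩ := q
          exact hGk x (List.of_mem_zip hq).1
        apply evalTagged_wrong Glist target w body hbwf
        refine ⟨q.1, hq1Glist, q.2,
          bindCtx_mem_Gk Gk Lk tup hlenT hnodup q hq ctxT, ?_⟩
        rw [← h2 q.1 hq1Glist, ha]
        simp only [ne_eq, Option.some.injEq]
        exact hqa

lemma length_of_mem_spaceTuples [DecidableEq V] (sp : ℕ → Finset V) :
    ∀ (l : List ℕ) (t : List V), t ∈ spaceTuples sp l → t.length = l.length := by
  intro l
  induction l with
  | nil => intro t ht; simp only [spaceTuples, Finset.mem_singleton] at ht; simp [ht]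
  | cons g gs ih =>
      intro t ht
      simp only [spaceTuples, Finset.mem_image, Finset.mem_product] at ht
      obtain ⟨⟨a, b⟩, ⟨_, hb⟩, rfl⟩ := ht
      simp [ih b hb]

lemma fullCtx_not_mem (Glist : List ℕ) (Gstar : List V) (p : ℕ) (hp : p ∉ Glist) :
    fullCtx Glist Gstar p = none :=
  bindCtx_not_mem _ Glist Gstar p hp

lemma fullCtx_cons_self (g : ℕ) (a : V) (gs : List ℕ) (as : List V) :
    fullCtx (g :: gs) (a :: as) g = some a := by
  simp [fullCtx, bindCtx, List.find?]

lemma fullCtx_cons_ne (g : ℕ) (a : V) (gs : List ℕ) (as : List V) (p : ℕ) (h : p ≠ g) :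
    fullCtx (g :: gs) (a :: as) p = fullCtx gs as p := by
  simp only [fullCtx, bindCtx, List.zip_cons_cons]
  rw [List.find?_cons_of_neg]
  simp [Ne.symm h]

lemma map_fullCtx (Glist : List ℕ) (Gstar : List V) (hnd : Glist.Nodup)
    (hlen : Gstar.length = Glist.length) :
    Glist.map (fullCtx Glist Gstar) = Gstar.map some := by
  induction Glist generalizing Gstar with
  | nil =>
      have : Gstar = [] := List.length_eq_zero_iff.mp (by simpa using hlen)
      simp [this]
  | cons g gs ih =>
      cases Gstar with
      | nil => simp at hlen
      | cons a as =>
          have hnd' := hnd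
          rw [List.nodup_cons] at hnd'
          simp only [List.map_cons]
          rw [fullCtx_cons_self]
          congr 1
          have : gs.map (fullCtx (g :: gs) (a :: as)) = gs.map (fullCtx gs as) := by
            apply List.map_congr_left
            intro p hp
            exact fullCtx_cons_ne g a gs as p (fun h => hnd'.1 (h ▸ hp))
          rw [this]
          exact ih as hnd'.2 (by simpa using hlen)

lemma fullCtx_isSome (Glist : List ℕ) (Gstar : List V) (hnd : Glist.Nodup)
    (hlen : Gstar.length = Glist.length) (g : ℕ) (hg : g ∈ Glist) :
    ∃ a, fullCtx Glist Gstar g = some a := by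
  have h := map_fullCtx Glist Gstar hnd hlen
  have : fullCtx Glist Gstar g ∈ Glist.map (fullCtx Glist Gstar) := List.mem_map_of_mem hg
  rw [h] at this
  rcases List.mem_map.mp this with ⟨a, _, ha⟩
  exact ⟨a, ha.symm⟩

/-- **Proposition 1 (correctness of the efficient instantiation algorithm).**  Let `e` be a
symbolic multidimensional expression with global placeholder tuple `Glist` satisfying the
assumptions of Lemmas 1 and 2: every path from a leaf node to the root passes through at
least one sum operator (`e.allUnderSum`), and for every leaf node the union of the global
index placeholder tuples `Gk` over all sum operators on its path to the root equals `Glist`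
(`e.covers Glist []`, together with the well-formedness conditions `e.wf Glist`).  Then,
given the same set data, the constraint matrices output by the exhaustive instantiation
algorithm (Algorithm 1) and by the context-passing instantiation algorithm (Algorithm 2)
are identical: for every global index tuple `G* ∈ space(G)` and every variable `w`, the
coefficient of `w` in the row tagged `G*` produced by Algorithm 2 (run from the empty
context, aggregating tagged terms with equal tags) equals the coefficient of `w` in the
expression `expr_{G*}` produced by Algorithm 1. -/
theorem efficient_instantiation_correct [DecidableEq V] [DecidableEq Var]
    (sp : ℕ → Finset V) (Glist : List ℕ) (hnd : Glist.Nodup)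
    (e : GExpr V Var) (hwf : e.wf Glist) (hsum : e.allUnderSum)
    (hcov : e.covers Glist []) :
    ∀ Gstar ∈ spaceTuples sp Glist, ∀ w : Var,
      evalTagged Glist e (fun _ => none) (Gstar.map some) w =
      evalFull e (fullCtx Glist Gstar) w := by
  intro Gstar hGstar w
  have hlen : Gstar.length = Glist.length := length_of_mem_spaceTuples sp Glist Gstar hGstar
  have htag : Gstar.map some = Glist.map (fullCtx Glist Gstar) :=
    (map_fullCtx Glist Gstar hnd hlen).symm
  rw [htag]
  apply evalTagged_eq_evalFull Glist (fullCtx Glist Gstar)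
    (fun g hg => fullCtx_isSome Glist Gstar hnd hlen g hg) w e hwf []
    (fun _ => none) (fullCtx Glist Gstar) hcov
  · intro p hp
    have hpn : p ∉ Glist := fun h => by simpa using hp h
    exact (fullCtx_not_mem Glist Gstar p hpn).symm
  · intro g _; left; rfl
  · intro g _; rfl
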